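/- (Assertion 2: the energy density is the convex conjugate of the co-energy density.) Let E be a finite-dimensional real inner product space, let μ₀ > 0, m > 0, χ ≥ 0, J_p ∈ E, and let U : E → ℝ be continuous and m-strongly convex. Define the co-energy density w_*(H) = (μ₀/2)‖H‖² − inf_{J ∈ E} ( U(J) − ⟪H, J⟫ + χ‖J − J_p‖ ) and the energy density w(B) = inf_{J ∈ E} ( (1/(2μ₀))‖B − J‖² + U(J) + χ‖J − J_p‖ ). Then for every B ∈ E, w(B) = sup_{H ∈ E} ( ⟪H, B⟫ − w_*(H) ). -/

import Mathlib

open RealInnerProductSpace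

section Aux

variable {E : Type*} [NormedAddCommGroup E] [InnerProductSpace ℝ E] [FiniteDimensional ℝ E]

/-- A continuous convex function on a finite-dimensional space has an affine-type lower bound. -/
lemma aux_convex_lb {h : E → ℝ} (hc : Continuous h) (hv : ConvexOn ℝ Set.univ h) :
    ∃ C : ℝ, 0 ≤ C ∧ ∀ y : E, -(C * (‖y‖ + 1)) ≤ h y := by
  obtain ⟨z, hz, hzmin⟩ := (isCompact_closedBall (0 : E) 1).exists_isMinOn
    ⟨0, by simp⟩ hc.continuousOn
  set c := h z with hc'
  refine ⟨|c| + |h 0|, by positivity, fun y => ?_⟩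
  rcases le_or_gt ‖y‖ 1 with hy | hy
  · have h1 : c ≤ h y := hzmin (by simpa [Metric.mem_closedBall, dist_eq_norm] using hy)
    have h2 : -|c| ≤ c := neg_abs_le c
    have h3 : (0:ℝ) ≤ ‖y‖ := norm_nonneg _
    nlinarith [abs_nonneg c, abs_nonneg (h 0)]
  · set R := ‖y‖ with hR
    have hR1 : 1 < R := hy
    have hR0 : 0 < R := by linarith
    have hu : ‖R⁻¹ • y‖ = 1 := by
      rw [norm_smul, Real.norm_eq_abs, abs_of_pos (inv_pos.2 hR0)]
      field_simp
      exact hR.symm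
    have humem : R⁻¹ • y ∈ Metric.closedBall (0:E) 1 := by
      simp [Metric.mem_closedBall, dist_eq_norm, hu]
    have h1 : c ≤ h (R⁻¹ • y) := hzmin humem
    have hconv := hv.2 (Set.mem_univ y) (Set.mem_univ (0:E)) (by positivity : (0:ℝ) ≤ R⁻¹)
      (by rw [sub_nonneg, inv_le_one_iff₀]; right; linarith : (0:ℝ) ≤ 1 - R⁻¹)
      (by ring)
    simp only [smul_zero, add_zero, smul_eq_mul] at hconv
    have h2 : c ≤ R⁻¹ * h y + (1 - R⁻¹) * h 0 := h1.trans hconv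
    have h3 : R * c ≤ h y + (R - 1) * h 0 := by
      have := mul_le_mul_of_nonneg_left h2 hR0.le
      calc R * c ≤ R * (R⁻¹ * h y + (1 - R⁻¹) * h 0) := this
        _ = h y + (R - 1) * h 0 := by field_simp
    have h4 : -|c| ≤ c := neg_abs_le c
    have h5 : -|h 0| ≤ h 0 := neg_abs_le (h 0)
    have h6 : h 0 ≤ |h 0| := le_abs_self (h 0)
    nlinarith [abs_nonneg c, abs_nonneg (h 0)]

/-- Optimality condition: at a minimizer of `1/(2μ₀)‖B - ·‖² + g`, the vector
`μ₀⁻¹ • (B - J*)` is a subgradient of the convex function `g`. -/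
lemma aux_subgrad {g : E → ℝ} (hg : ConvexOn ℝ Set.univ g) {μ₀ : ℝ} (hμ₀ : 0 < μ₀)
    (B Js : E)
    (hmin : ∀ J : E, 1 / (2 * μ₀) * ‖B - Js‖ ^ 2 + g Js ≤ 1 / (2 * μ₀) * ‖B - J‖ ^ 2 + g J) :
    ∀ J : E, g Js + ⟪μ₀⁻¹ • (B - Js), J - Js⟫ ≤ g J := by
  intro J
  set v := J - Js with hv
  set A : ℝ := μ₀⁻¹ * ⟪B - Js, v⟫ with hA
  set c : ℝ := 1 / (2 * μ₀) * ‖v‖ ^ 2 with hc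
  have key : ∀ t : ℝ, t ∈ Set.Ioc (0:ℝ) 1 → A - t * c ≤ g J - g Js := by
    rintro t ⟨ht0, ht1⟩
    have hconv := hg.2 (Set.mem_univ Js) (Set.mem_univ J)
      (by linarith : (0:ℝ) ≤ 1 - t) ht0.le (by ring)
    have hpt : (1 - t) • Js + t • J = Js + t • v := by
      rw [hv, smul_sub, sub_smul, one_smul]; abel
    rw [hpt, smul_eq_mul, smul_eq_mul] at hconv
    have hm := hmin (Js + t • v)
    have hnorm : ‖B - (Js + t • v)‖ ^ 2
        = ‖B - Js‖ ^ 2 - 2 * (t * ⟪B - Js, v⟫) + t ^ 2 * ‖v‖ ^ 2 := by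
      have : B - (Js + t • v) = (B - Js) - t • v := by abel
      rw [this, norm_sub_sq_real, real_inner_smul_right, norm_smul, Real.norm_eq_abs,
        abs_of_pos ht0, mul_pow]
    rw [hnorm] at hm
    have hchain : 1 / (2 * μ₀) * ‖B - Js‖ ^ 2 + g Js
        ≤ 1 / (2 * μ₀) * (‖B - Js‖ ^ 2 - 2 * (t * ⟪B - Js, v⟫) + t ^ 2 * ‖v‖ ^ 2)
          + ((1 - t) * g Js + t * g J) := le_trans hm (by linarith)
    have hkey : t * (A - t * c) ≤ t * (g J - g Js) := by
      have hμ' : (0:ℝ) < 2 * μ₀ := by linarith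
      have e1 : t * (A - t * c)
          = 1 / (2 * μ₀) * (2 * (t * ⟪B - Js, v⟫)) - t ^ 2 * (1 / (2 * μ₀) * ‖v‖ ^ 2) := by
        rw [hA, hc]; field_simp
      nlinarith [hchain]
    exact le_of_mul_le_mul_left (by linarith [hkey]) ht0
  have hlim : Filter.Tendsto (fun t : ℝ => A - t * c) (nhdsWithin 0 (Set.Ioi 0)) (nhds A) := by
    have : Filter.Tendsto (fun t : ℝ => A - t * c) (nhds 0) (nhds (A - 0 * c)) :=
      ((continuous_const.sub (continuous_id.mul continuous_const)).tendsto 0)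
    simpa using this.mono_left nhdsWithin_le_nhds
  have hevt : ∀ᶠ t in nhdsWithin (0:ℝ) (Set.Ioi 0), A - t * c ≤ g J - g Js := by
    filter_upwards [Ioc_mem_nhdsGT_of_mem (by norm_num : (0:ℝ) ∈ Set.Ico (0:ℝ) 1)] with t ht
    exact key t ht
  have hAle : A ≤ g J - g Js := le_of_tendsto hlim hevt
  have : ⟪μ₀⁻¹ • (B - Js), v⟫ = A := by rw [real_inner_smul_left, hA]
  rw [this]; linarith

end Aux

/-- Assertion 2: the energy density
`w(B; J_p) = inf_J ((1/(2μ₀))‖B − J‖² + U(J) + χ‖J − J_p‖)` is the convex conjugate of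
the co-energy density `w_*(H; J_p) = (μ₀/2)‖H‖² − inf_J (U(J) − ⟪H, J⟫ + χ‖J − J_p‖)`. -/
theorem energy_density_is_conjugate_of_coenergy
    {E : Type*} [NormedAddCommGroup E] [InnerProductSpace ℝ E] [FiniteDimensional ℝ E]
    (μ₀ m : ℝ) (hμ₀ : 0 < μ₀) (hm : 0 < m) (χ : ℝ) (hχ : 0 ≤ χ) (Jp : E)
    (U : E → ℝ) (hUcont : Continuous U) (hUconv : StrongConvexOn Set.univ m U) :
    ∀ B : E,
      (⨅ J : E, (1 / (2 * μ₀) * ‖B - J‖ ^ 2 + U J + χ * ‖J - Jp‖))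
        = ⨆ H : E, (⟪H, B⟫ -
            (μ₀ / 2 * ‖H‖ ^ 2 - (⨅ J : E, (U J - ⟪H, J⟫ + χ * ‖J - Jp‖)))) := by
  intro B
  -- convexity facts
  have hUconvex : ConvexOn ℝ Set.univ U := strongConvexOn_zero.mp (hUconv.mono hm.le)
  have hnormconv : ConvexOn ℝ Set.univ (fun J : E => χ * ‖J - Jp‖) := by
    refine ⟨convex_univ, fun x _ y _ a b ha hb hab => ?_⟩
    have h1 : a • x + b • y - Jp = a • (x - Jp) + b • (y - Jp) := by
      have h0 : a • (x - Jp) + b • (y - Jp) = a • x + b • y - (a + b) • Jp := by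
        rw [smul_sub, smul_sub, add_smul]; abel
      rw [h0, hab, one_smul]
    simp only [smul_eq_mul]
    rw [h1]
    calc χ * ‖a • (x - Jp) + b • (y - Jp)‖
        ≤ χ * (a * ‖x - Jp‖ + b * ‖y - Jp‖) := by
          apply mul_le_mul_of_nonneg_left _ hχ
          calc ‖a • (x - Jp) + b • (y - Jp)‖ ≤ ‖a • (x - Jp)‖ + ‖b • (y - Jp)‖ := norm_add_le _ _
            _ = a * ‖x - Jp‖ + b * ‖y - Jp‖ := by
                rw [norm_smul, norm_smul, Real.norm_eq_abs, Real.norm_eq_abs,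
                  abs_of_nonneg ha, abs_of_nonneg hb]
      _ = a * (χ * ‖x - Jp‖) + b * (χ * ‖y - Jp‖) := by ring
  have hgconv : ConvexOn ℝ Set.univ (fun J : E => U J + χ * ‖J - Jp‖) :=
    hUconvex.add hnormconv
  -- lower-bound constant from the convex part of U
  obtain ⟨C, hC0, hC⟩ := aux_convex_lb
    (h := fun x : E => U x - m / 2 * ‖x‖ ^ 2)
    (hUcont.sub (by fun_prop)) (strongConvexOn_iff_convex.mp hUconv)
  have hUlb : ∀ J : E, m / 2 * ‖J‖ ^ 2 - C * (‖J‖ + 1) ≤ U J := by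
    intro J
    have := hC J
    linarith
  -- quadratic lower bound constant
  have hquad : ∀ a r : ℝ, 0 ≤ a → 0 ≤ r →
      -((C + a) ^ 2 / (2 * m)) - C ≤ m / 2 * r ^ 2 - C * (r + 1) - a * r := by
    intro a r ha hr
    rw [← sub_nonneg]
    have e1 : m / 2 * r ^ 2 - C * (r + 1) - a * r - (-((C + a) ^ 2 / (2 * m)) - C)
        = (m * r - (C + a)) ^ 2 / (2 * m) := by field_simp; ring
    rw [e1]
    positivity
  -- bounded below: inner infimum integrand
  have hbddI : ∀ H : E, BddBelow (Set.range fun J : E => U J - ⟪H, J⟫ + χ * ‖J - Jp‖) := by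
    intro H
    refine ⟨-((C + ‖H‖) ^ 2 / (2 * m)) - C, ?_⟩
    rintro x ⟨J, rfl⟩
    have h1 := hUlb J
    have h2 : ⟪H, J⟫ ≤ ‖H‖ * ‖J‖ := real_inner_le_norm H J
    have h3 : (0:ℝ) ≤ χ * ‖J - Jp‖ := by positivity
    have h4 := hquad ‖H‖ ‖J‖ (norm_nonneg _) (norm_nonneg _)
    linarith
  -- bounded below: the energy integrand
  have hbddF : BddBelow (Set.range fun J : E =>
      1 / (2 * μ₀) * ‖B - J‖ ^ 2 + U J + χ * ‖J - Jp‖) := by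
    refine ⟨-((C + 0) ^ 2 / (2 * m)) - C, ?_⟩
    rintro x ⟨J, rfl⟩
    have h1 := hUlb J
    have h3 : (0:ℝ) ≤ χ * ‖J - Jp‖ := by positivity
    have h4 := hquad 0 ‖J‖ le_rfl (norm_nonneg _)
    have h5 : (0:ℝ) ≤ 1 / (2 * μ₀) * ‖B - J‖ ^ 2 := by positivity
    linarith
  -- easy direction: each term in the sup is at most the infimum
  have hub : ∀ H : E,
      ⟪H, B⟫ - (μ₀ / 2 * ‖H‖ ^ 2 - (⨅ J : E, (U J - ⟪H, J⟫ + χ * ‖J - Jp‖)))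
        ≤ ⨅ J : E, (1 / (2 * μ₀) * ‖B - J‖ ^ 2 + U J + χ * ‖J - Jp‖) := by
    intro H
    apply le_ciInf
    intro J
    have h1 : (⨅ J : E, (U J - ⟪H, J⟫ + χ * ‖J - Jp‖)) ≤ U J - ⟪H, J⟫ + χ * ‖J - Jp‖ :=
      ciInf_le (hbddI H) J
    have h2 : ⟪H, B⟫ - ⟪H, J⟫ = ⟪H, B - J⟫ := (inner_sub_right H B J).symm
    have h3 : ⟪H, B - J⟫ ≤ ‖H‖ * ‖B - J‖ := real_inner_le_norm H (B - J)
    have h4 : ‖H‖ * ‖B - J‖ ≤ μ₀ / 2 * ‖H‖ ^ 2 + 1 / (2 * μ₀) * ‖B - J‖ ^ 2 := by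
      have e1 : μ₀ / 2 * ‖H‖ ^ 2 + 1 / (2 * μ₀) * ‖B - J‖ ^ 2 - ‖H‖ * ‖B - J‖
          = (μ₀ * ‖H‖ - ‖B - J‖) ^ 2 / (2 * μ₀) := by field_simp; ring
      nlinarith [sq_nonneg (μ₀ * ‖H‖ - ‖B - J‖), div_nonneg (sq_nonneg (μ₀ * ‖H‖ - ‖B - J‖))
        (by linarith : (0:ℝ) ≤ 2 * μ₀)]
    linarith
  -- continuity and coercivity: the energy has a minimizer
  have hFcont : Continuous (fun J : E =>
      1 / (2 * μ₀) * ‖B - J‖ ^ 2 + U J + χ * ‖J - Jp‖) := by fun_prop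
  have hev : ∀ᶠ J in Filter.cocompact E,
      (1 / (2 * μ₀) * ‖B - (0:E)‖ ^ 2 + U 0 + χ * ‖(0:E) - Jp‖)
        ≤ 1 / (2 * μ₀) * ‖B - J‖ ^ 2 + U J + χ * ‖J - Jp‖ := by
    obtain ⟨K, hK0, hK⟩ : ∃ K : ℝ, 0 ≤ K ∧
        (1 / (2 * μ₀) * ‖B - (0:E)‖ ^ 2 + U 0 + χ * ‖(0:E) - Jp‖) ≤ K :=
      ⟨|1 / (2 * μ₀) * ‖B - (0:E)‖ ^ 2 + U 0 + χ * ‖(0:E) - Jp‖|, abs_nonneg _, le_abs_self _⟩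
    filter_upwards [tendsto_norm_cocompact_atTop.eventually
      (Filter.eventually_ge_atTop (max 1 ((2 / m) * (2 * C + K + 1))))] with J hJ
    have hr1 : (1:ℝ) ≤ ‖J‖ := le_trans (le_max_left _ _) hJ
    have hr2 : (2 / m) * (2 * C + K + 1) ≤ ‖J‖ := le_trans (le_max_right _ _) hJ
    have h5 : 2 * C + K + 1 ≤ m / 2 * ‖J‖ := by
      have := mul_le_mul_of_nonneg_left hr2 (by positivity : (0:ℝ) ≤ m / 2)
      calc 2 * C + K + 1 = m / 2 * ((2 / m) * (2 * C + K + 1)) := by field_simp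
        _ ≤ m / 2 * ‖J‖ := this
    have h1 := hUlb J
    have h3 : (0:ℝ) ≤ χ * ‖J - Jp‖ := by positivity
    have h5' : (0:ℝ) ≤ 1 / (2 * μ₀) * ‖B - J‖ ^ 2 := by positivity
    have h7 : m / 2 * ‖J‖ * ‖J‖ = m / 2 * ‖J‖ ^ 2 := by ring
    have h8 := mul_le_mul_of_nonneg_right h5 (by linarith : (0:ℝ) ≤ ‖J‖)
    have h9 := mul_le_mul_of_nonneg_left hr1 hC0
    have h10 := mul_le_mul_of_nonneg_left hr1 hK0
    refine le_trans hK ?_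
    nlinarith [h9, h10, h7, h8, h1, h3, h5', hr1]
  obtain ⟨Js, hJs⟩ := hFcont.exists_forall_le' 0 hev
  have hJs' : ∀ y : E, 1 / (2 * μ₀) * ‖B - Js‖ ^ 2 + U Js + χ * ‖Js - Jp‖
      ≤ 1 / (2 * μ₀) * ‖B - y‖ ^ 2 + U y + χ * ‖y - Jp‖ := hJs
  -- subgradient at the minimizer
  have hmin' : ∀ J : E, 1 / (2 * μ₀) * ‖B - Js‖ ^ 2 + (U Js + χ * ‖Js - Jp‖)
      ≤ 1 / (2 * μ₀) * ‖B - J‖ ^ 2 + (U J + χ * ‖J - Jp‖) := by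
    intro J
    have := hJs' J
    linarith
  set Hs : E := μ₀⁻¹ • (B - Js) with hHs
  have hsub : ∀ J : E, (U Js + χ * ‖Js - Jp‖) + ⟪Hs, J - Js⟫ ≤ U J + χ * ‖J - Jp‖ :=
    aux_subgrad hgconv hμ₀ B Js hmin'
  -- the inner infimum at Hs is attained at Js
  have hIHs : (⨅ J : E, (U J - ⟪Hs, J⟫ + χ * ‖J - Jp‖))
      = U Js + χ * ‖Js - Jp‖ - ⟪Hs, Js⟫ := by
    apply le_antisymm
    · have := ciInf_le (hbddI Hs) Js
      linarith [this]
    · apply le_ciInf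
      intro J
      have h1 := hsub J
      have h2 : ⟪Hs, J - Js⟫ = ⟪Hs, J⟫ - ⟪Hs, Js⟫ := inner_sub_right Hs J Js
      linarith [h1, h2.ge, h2.le]
  -- value of the sup-term at Hs equals the minimum value
  have hterm : ⟪Hs, B⟫ - (μ₀ / 2 * ‖Hs‖ ^ 2 - (⨅ J : E, (U J - ⟪Hs, J⟫ + χ * ‖J - Jp‖)))
      = 1 / (2 * μ₀) * ‖B - Js‖ ^ 2 + U Js + χ * ‖Js - Jp‖ := by
    have h1 : ⟪Hs, B⟫ - ⟪Hs, Js⟫ = ⟪Hs, B - Js⟫ := (inner_sub_right Hs B Js).symm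
    have h2 : ⟪Hs, B - Js⟫ = μ₀⁻¹ * ‖B - Js‖ ^ 2 := by
      rw [hHs, real_inner_smul_left, real_inner_self_eq_norm_sq]
    have h3 : ‖Hs‖ ^ 2 = μ₀⁻¹ ^ 2 * ‖B - Js‖ ^ 2 := by
      rw [hHs, norm_smul, Real.norm_eq_abs, abs_of_pos (inv_pos.2 hμ₀), mul_pow]
    have h2' : ⟪Hs, B⟫ = μ₀⁻¹ * ‖B - Js‖ ^ 2 + ⟪Hs, Js⟫ := by linarith [h1, h2]
    have hne : μ₀ ≠ 0 := hμ₀.ne'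
    rw [hIHs, h2', h3]
    field_simp
    ring
  -- the infimum is attained at Js
  have hinfF : (⨅ J : E, (1 / (2 * μ₀) * ‖B - J‖ ^ 2 + U J + χ * ‖J - Jp‖))
      = 1 / (2 * μ₀) * ‖B - Js‖ ^ 2 + U Js + χ * ‖Js - Jp‖ :=
    le_antisymm (ciInf_le hbddF Js) (le_ciInf hJs')
  -- bounded above for the sup
  have hbddS : BddAbove (Set.range fun H : E =>
      ⟪H, B⟫ - (μ₀ / 2 * ‖H‖ ^ 2 - (⨅ J : E, (U J - ⟪H, J⟫ + χ * ‖J - Jp‖)))) := by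
    refine ⟨⨅ J : E, (1 / (2 * μ₀) * ‖B - J‖ ^ 2 + U J + χ * ‖J - Jp‖), ?_⟩
    rintro x ⟨H, rfl⟩
    exact hub H
  apply le_antisymm
  · calc (⨅ J : E, (1 / (2 * μ₀) * ‖B - J‖ ^ 2 + U J + χ * ‖J - Jp‖))
        = 1 / (2 * μ₀) * ‖B - Js‖ ^ 2 + U Js + χ * ‖Js - Jp‖ := hinfF
      _ = ⟪Hs, B⟫ - (μ₀ / 2 * ‖Hs‖ ^ 2 - (⨅ J : E, (U J - ⟪Hs, J⟫ + χ * ‖J - Jp‖))) :=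
          hterm.symm
      _ ≤ _ := le_ciSup hbddS Hs
  · exact ciSup_le hub
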